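/- Let μ be a Borel probability measure on S^m satisfying μ(ω) < σ(ω_{π/2}) for every nonempty compact spherically convex ω ⊊ S^m. Then there exists ε > 0 such that for every nonempty compact spherically convex ω ⊊ S^m, μ(S^m \ ω) > σ(ω*) + ε. -/

import Mathlib

open MeasureTheory Metric Set Real
open scoped ENNReal

noncomputable section

abbrev Euc (m : ℕ) : Type := EuclideanSpace ℝ (Fin (m + 1))

abbrev Sph (m : ℕ) : Type := Metric.sphere (0 : Euc m) 1

/-- geodesic distance on the sphere -/
def gdist {m : ℕ} (n x : Sph m) : ℝ :=
  Real.arccos (inner ℝ (n : Euc m) (x : Euc m))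

/-- the logarithmic cost, with values in `[0,∞]` -/
def cost {m : ℕ} (n x : Sph m) : ℝ≥0∞ :=
  if 0 < (inner ℝ (n : Euc m) (x : Euc m) : ℝ) then
    ENNReal.ofReal (-Real.log (inner ℝ (n : Euc m) (x : Euc m))) else ∞

/-- the uniform probability measure on the sphere -/
def unif (m : ℕ) : Measure (Sph m) :=
  ((volume : Measure (Euc m)).toSphere Set.univ)⁻¹ • (volume : Measure (Euc m)).toSphere

/-- the radial function of a set with respect to the origin -/
def radial {m : ℕ} (Ω : Set (Euc m)) (x : Sph m) : ℝ :=
  sSup {s : ℝ | 0 ≤ s ∧ s • (x : Euc m) ∈ Ω}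

/-- the Euclidean cone generated by a subset of the sphere -/
def cone {m : ℕ} (A : Set (Sph m)) : Set (Euc m) :=
  {y | ∃ r : ℝ, 0 ≤ r ∧ ∃ x ∈ A, y = r • (x : Euc m)}

/-- a subset of the sphere is spherically convex if the cone it generates is convex -/
def SphConvex {m : ℕ} (A : Set (Sph m)) : Prop := Convex ℝ (cone A)

/-- open `r`-neighbourhood for the geodesic distance -/
def nbhd {m : ℕ} (V : Set (Sph m)) (r : ℝ) : Set (Sph m) :=
  {y | ∃ x ∈ V, gdist y x < r}

/-- the spherical polar set -/
def spolar {m : ℕ} (ω : Set (Sph m)) : Set (Sph m) :=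
  {y | ∀ x ∈ ω, (inner ℝ (y : Euc m) (x : Euc m) : ℝ) ≤ 0}

/-- the support function of a star-shaped set -/
def suppFn {m : ℕ} (F : Set (Euc m)) (n : Sph m) : ℝ :=
  ⨆ x : Sph m, radial F x * (inner ℝ (x : Euc m) (n : Euc m) : ℝ)

/-- the polar set in Euclidean space -/
def polar {m : ℕ} (F : Set (Euc m)) : Set (Euc m) :=
  {n | ∀ x ∈ F, (inner ℝ x n : ℝ) ≤ 1}

/-- the logarithmic cost, with values in `ℝ ∪ {±∞}` -/
def costE {m : ℕ} (n x : Sph m) : EReal :=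
  if 0 < (inner ℝ (n : Euc m) (x : Euc m) : ℝ) then
    ((-Real.log (inner ℝ (n : Euc m) (x : Euc m)) : ℝ) : EReal) else ⊤


open Filter Topology TopologicalSpace

section AuxLemmas

lemma arccos_lt_pi_div_two_iff (t : ℝ) : Real.arccos t < π/2 ↔ 0 < t := by
  rw [Real.arccos, sub_lt_self_iff]
  exact ⟨fun h => by by_contra hc; push_neg at hc; nlinarith [Real.arcsin_nonpos.2 hc],
    fun h => Real.arcsin_pos.2 h⟩

lemma nbhd_eq_compl_spolar {m : ℕ} (ω : Set (Sph m)) :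
    nbhd ω (π/2) = (spolar ω)ᶜ := by
  ext y
  simp only [nbhd, spolar, Set.mem_setOf_eq, Set.mem_compl_iff, not_forall, gdist]
  constructor
  · rintro ⟨x, hx, h⟩
    exact ⟨x, hx, by rw [arccos_lt_pi_div_two_iff] at h; linarith⟩
  · rintro ⟨x, hx, h⟩
    push_neg at h
    exact ⟨x, hx, (arccos_lt_pi_div_two_iff _).2 h⟩

instance unif_prob (m : ℕ) : IsProbabilityMeasure (unif m) := by
  constructor
  rw [unif, Measure.smul_apply, smul_eq_mul]
  have h := (volume : Measure (Euc m)).toSphere_apply_univ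
  rw [ENNReal.inv_mul_cancel]
  · rw [h]
    simp only [ne_eq, mul_eq_zero, not_or]
    exact ⟨by simp [finrank_euclideanSpace_fin], (Metric.measure_ball_pos _ 0 one_pos).ne'⟩
  · rw [h]
    exact ENNReal.mul_ne_top (by simp) (measure_ball_lt_top).ne

lemma isClosed_spolar_like {m : ℕ} (ω : Set (Sph m)) (c : ℝ) :
    IsClosed {y : Sph m | ∀ x ∈ ω, (inner ℝ (y : Euc m) (x : Euc m) : ℝ) ≤ c} := by
  have : {y : Sph m | ∀ x ∈ ω, (inner ℝ (y : Euc m) (x : Euc m) : ℝ) ≤ c} =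
      ⋂ x ∈ ω, {y : Sph m | (inner ℝ (y : Euc m) (x : Euc m) : ℝ) ≤ c} := by
    ext y; simp
  rw [this]
  refine isClosed_biInter fun x _ => ?_
  exact isClosed_le (Continuous.inner (continuous_subtype_val) continuous_const) continuous_const

lemma isClosed_spolar {m : ℕ} (ω : Set (Sph m)) : IsClosed (spolar ω) :=
  isClosed_spolar_like ω 0

lemma norm_coe_sph {m : ℕ} (x : Sph m) : ‖(x : Euc m)‖ = 1 := by
  have := x.2; rwa [mem_sphere_iff_norm, sub_zero] at this

lemma mem_cone_self {m : ℕ} {A : Set (Sph m)} {x : Sph m} (hx : x ∈ A) :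
    (x : Euc m) ∈ cone A := ⟨1, zero_le_one, x, hx, (one_smul _ _).symm⟩

lemma zero_mem_cone {m : ℕ} {A : Set (Sph m)} (hA : A.Nonempty) : (0 : Euc m) ∈ cone A := by
  obtain ⟨x, hx⟩ := hA; exact ⟨0, le_refl _, x, hx, (zero_smul _ _).symm⟩

lemma smul_mem_cone {m : ℕ} {A : Set (Sph m)} {v : Euc m} (hv : v ∈ cone A) {r : ℝ} (hr : 0 ≤ r) :
    r • v ∈ cone A := by
  obtain ⟨s, hs, x, hx, rfl⟩ := hv
  exact ⟨r * s, mul_nonneg hr hs, x, hx, smul_smul r s _⟩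

lemma norm_unit_mem_of_mem_cone {m : ℕ} {A : Set (Sph m)} {v : Euc m} (hv : v ∈ cone A)
    (h0 : v ≠ 0) : ∃ x : Sph m, x ∈ A ∧ (x : Euc m) = ‖v‖⁻¹ • v := by
  obtain ⟨r, hr, x, hx, rfl⟩ := hv
  have hxn : ‖(x : Euc m)‖ = 1 := norm_coe_sph x
  have hrn : ‖r • (x : Euc m)‖ = r := by rw [norm_smul, hxn, mul_one, Real.norm_of_nonneg hr]
  have hr0 : r ≠ 0 := by rintro rfl; simp at h0
  refine ⟨x, hx, ?_⟩
  rw [hrn, smul_smul, inv_mul_cancel₀ hr0, one_smul]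

lemma isClosed_cone {m : ℕ} {A : Set (Sph m)} (hA : IsCompact A) : IsClosed (cone A) := by
  rcases A.eq_empty_or_nonempty with rfl | hne
  · have : cone (∅ : Set (Sph m)) = ∅ := by
      ext v; simp [cone]
    rw [this]; exact isClosed_empty
  have hK : IsClosed ((↑) '' A : Set (Euc m)) :=
    (hA.image continuous_subtype_val).isClosed
  refine IsSeqClosed.isClosed (fun u v hu huv => ?_)
  rcases eq_or_ne v 0 with rfl | hv0
  · exact zero_mem_cone hne
  · have hnv : Filter.Tendsto (fun j => ‖u j‖) Filter.atTop (nhds ‖v‖) :=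
      (continuous_norm.tendsto v).comp huv
    have hev : ∀ᶠ j in Filter.atTop, u j ≠ 0 := by
      have : ∀ᶠ j in Filter.atTop, 0 < ‖u j‖ :=
        hnv.eventually (eventually_gt_nhds (norm_pos_iff.2 hv0))
      exact this.mono fun j hj => norm_pos_iff.1 hj
    have hmem : ∀ᶠ j in Filter.atTop, ‖u j‖⁻¹ • u j ∈ ((↑) '' A : Set (Euc m)) := by
      refine hev.mono fun j hj => ?_
      obtain ⟨x, hx, hxe⟩ := norm_unit_mem_of_mem_cone (hu j) hj
      exact ⟨x, hx, hxe⟩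
    have hlim : Filter.Tendsto (fun j => ‖u j‖⁻¹ • u j) Filter.atTop (nhds (‖v‖⁻¹ • v)) :=
      (hnv.inv₀ (norm_ne_zero_iff.2 hv0)).smul huv
    have : ‖v‖⁻¹ • v ∈ ((↑) '' A : Set (Euc m)) :=
      hK.mem_of_tendsto hlim hmem
    obtain ⟨x, hx, hxe⟩ := this
    exact ⟨‖v‖, norm_nonneg v, x, hx, by
      rw [hxe, smul_smul, mul_inv_cancel₀ (norm_ne_zero_iff.2 hv0), one_smul]⟩

lemma cone_ne_univ {m : ℕ} {A : Set (Sph m)} (hA : A ≠ Set.univ) : cone A ≠ Set.univ := by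
  intro h
  apply hA
  rw [Set.eq_univ_iff_forall]
  intro x
  have : (x : Euc m) ∈ cone A := h ▸ Set.mem_univ _
  obtain ⟨y, hy, hye⟩ := norm_unit_mem_of_mem_cone this (by
    simp [← norm_pos_iff, norm_coe_sph x])
  have : y = x := Subtype.ext (by rw [hye, norm_coe_sph, inv_one, one_smul])
  rwa [← this]

/-- supporting hemisphere -/
lemma exists_hemisphere {m : ℕ} {ω : Set (Sph m)} (hne : ω.Nonempty) (hcp : IsCompact ω)
    (hcv : SphConvex ω) (hpr : ω ≠ Set.univ) :
    ∃ n : Sph m, ∀ x ∈ ω, (inner ℝ (x : Euc m) (n : Euc m) : ℝ) ≤ 0 := by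
  have hcl : IsClosed (cone ω) := isClosed_cone hcp
  obtain ⟨p, hp⟩ : ∃ p : Euc m, p ∉ cone ω := by
    by_contra h
    push_neg at h
    exact cone_ne_univ hpr (Set.eq_univ_iff_forall.2 h)
  obtain ⟨f, u, hfu, hup⟩ := geometric_hahn_banach_closed_point hcv hcl hp
  have hu0 : 0 < u := by
    have := hfu 0 (zero_mem_cone hne)
    simpa using this
  have hle : ∀ a ∈ cone ω, f a ≤ 0 := by
    intro a ha
    by_contra hfa
    push_neg at hfa
    obtain ⟨r, hr0, hru⟩ : ∃ r : ℝ, 0 ≤ r ∧ u < r * f a := by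
      refine ⟨(u + 1) / f a, by positivity, ?_⟩
      rw [div_mul_cancel₀ _ hfa.ne']
      linarith
    have := hfu (r • a) (smul_mem_cone ha hr0)
    rw [f.map_smul, smul_eq_mul] at this
    linarith
  set v := (InnerProductSpace.toDual ℝ (Euc m)).symm f with hv
  have hvf : ∀ y : Euc m, (inner ℝ v y : ℝ) = f y := fun y =>
    InnerProductSpace.toDual_symm_apply
  have hvne : v ≠ 0 := by
    intro h
    have := hvf p
    rw [h, inner_zero_left] at this
    linarith [hup, hu0]
  have hnvne : ‖v‖ ≠ 0 := norm_ne_zero_iff.2 hvne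
  refine ⟨⟨‖v‖⁻¹ • v, ?_⟩, ?_⟩
  · rw [mem_sphere_iff_norm, sub_zero, norm_smul, norm_inv, norm_norm,
      inv_mul_cancel₀ hnvne]
  · intro x hx
    have h1 : (inner ℝ (x : Euc m) v : ℝ) ≤ 0 := by
      rw [real_inner_comm, hvf]
      exact hle _ (mem_cone_self hx)
    have : (inner ℝ (x : Euc m) (‖v‖⁻¹ • v) : ℝ) = ‖v‖⁻¹ * inner ℝ (x : Euc m) v := by
      rw [real_inner_smul_right]
    rw [this]
    exact mul_nonpos_of_nonneg_of_nonpos (by positivity) h1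

section HausdorffLimits

variable {α : Type*} [MetricSpace α]

lemma hd_tendsto {K : ℕ → NonemptyCompacts α} {L : NonemptyCompacts α}
    (h : Tendsto K atTop (𝓝 L)) :
    Tendsto (fun j => hausdorffDist (K j : Set α) (L : Set α)) atTop (𝓝 0) := by
  have := (tendsto_iff_dist_tendsto_zero).1 h
  simpa [Metric.NonemptyCompacts.dist_eq] using this

lemma hEdist_ne_top (K L : NonemptyCompacts α) :
    EMetric.hausdorffEdist (K : Set α) (L : Set α) ≠ ⊤ :=
  hausdorffEdist_ne_top_of_nonempty_of_bounded K.nonempty L.nonempty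
    K.isCompact.isBounded L.isCompact.isBounded

/-- approximating sequence for a point of the limit -/
lemma exists_approx_seq {K : ℕ → NonemptyCompacts α}
    {L : NonemptyCompacts α} (h : Tendsto K atTop (𝓝 L)) {x : α}
    (hx : x ∈ (L : Set α)) :
    ∃ y : ℕ → α, (∀ j, y j ∈ (K j : Set α)) ∧ Tendsto y atTop (𝓝 x) := by
  have hsel : ∀ j, ∃ y ∈ (K j : Set α), infDist x (K j : Set α) = dist x y := fun j =>
    (K j).isCompact.exists_infDist_eq_dist (K j).nonempty x
  choose y hy hyd using hsel
  refine ⟨y, hy, ?_⟩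
  rw [tendsto_iff_dist_tendsto_zero]
  have hle : ∀ j, dist x (y j) ≤ hausdorffDist (K j : Set α) (L : Set α) := by
    intro j
    rw [← hyd j]
    rw [hausdorffDist_comm]
    exact infDist_le_hausdorffDist_of_mem hx (hEdist_ne_top L (K j))
  have h0 : ∀ j, (0:ℝ) ≤ dist x (y j) := fun j => dist_nonneg
  have := squeeze_zero h0 hle (hd_tendsto h)
  simpa [dist_comm] using this

/-- limits of points in the sets belong to the limit set -/
lemma mem_limit_of_seq {K : ℕ → NonemptyCompacts α}
    {L : NonemptyCompacts α} (h : Tendsto K atTop (𝓝 L)) {y : ℕ → α} {x : α}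
    (hy : ∀ᶠ j in atTop, y j ∈ (K j : Set α)) (hyx : Tendsto y atTop (𝓝 x)) :
    x ∈ (L : Set α) := by
  have key : infDist x (L : Set α) = 0 := by
    have hle : ∀ᶠ j in atTop, infDist x (L : Set α) ≤
        hausdorffDist (K j : Set α) (L : Set α) + dist x (y j) := by
      refine hy.mono fun j hj => ?_
      calc infDist x (L : Set α) ≤ infDist (y j) (L : Set α) + dist x (y j) :=
            infDist_le_infDist_add_dist
        _ ≤ hausdorffDist (K j : Set α) (L : Set α) + dist x (y j) := by
            gcongr
            exact infDist_le_hausdorffDist_of_mem hj (hEdist_ne_top (K j) L)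
    have hlim : Tendsto (fun j => hausdorffDist (K j : Set α) (L : Set α) + dist x (y j))
        atTop (𝓝 0) := by
      have h1 : Tendsto (fun j => dist x (y j)) atTop (𝓝 0) := by
        simpa [dist_comm] using tendsto_iff_dist_tendsto_zero.1 hyx
      simpa using (hd_tendsto h).add h1
    have := ge_of_tendsto hlim hle
    exact le_antisymm this infDist_nonneg
  exact (L.isCompact.isClosed.mem_iff_infDist_zero L.nonempty).2 key

end HausdorffLimits

lemma sphConvex_limit {m : ℕ} {K : ℕ → NonemptyCompacts (Sph m)}
    {L : NonemptyCompacts (Sph m)} (h : Tendsto K atTop (𝓝 L))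
    (hc : ∀ j, SphConvex (K j : Set (Sph m))) : SphConvex (L : Set (Sph m)) := by
  rintro u hu v hv a b ha hb hab
  obtain ⟨r, hr, x, hx, rfl⟩ := hu
  obtain ⟨t, ht, y, hy, rfl⟩ := hv
  obtain ⟨xs, hxs, hxst⟩ := exists_approx_seq h hx
  obtain ⟨ys, hys, hyst⟩ := exists_approx_seq h hy
  set w : Euc m := a • r • (x : Euc m) + b • t • (y : Euc m) with hw
  set ws : ℕ → Euc m := fun j => a • r • (xs j : Euc m) + b • t • (ys j : Euc m) with hws
  have hwsc : ∀ j, ws j ∈ cone (K j : Set (Sph m)) := fun j =>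
    (hc j) (smul_mem_cone (mem_cone_self (hxs j)) hr)
      (smul_mem_cone (mem_cone_self (hys j)) ht) ha hb hab
  have hxst' : Tendsto (fun j => (xs j : Euc m)) atTop (𝓝 (x : Euc m)) :=
    (continuous_subtype_val.tendsto _).comp hxst
  have hyst' : Tendsto (fun j => (ys j : Euc m)) atTop (𝓝 (y : Euc m)) :=
    (continuous_subtype_val.tendsto _).comp hyst
  have hwst : Tendsto ws atTop (𝓝 w) := by
    exact ((tendsto_const_nhds.smul (tendsto_const_nhds.smul hxst')).add
      (tendsto_const_nhds.smul (tendsto_const_nhds.smul hyst')))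
  rcases eq_or_ne w 0 with hw0 | hw0
  · rw [hw0]; exact zero_mem_cone L.nonempty
  · have hrep : ∀ j, ∃ z : Sph m, z ∈ (K j : Set (Sph m)) ∧
        (ws j ≠ 0 → (z : Euc m) = ‖ws j‖⁻¹ • ws j) := by
      intro j
      obtain ⟨s, hs, z, hz, hzw⟩ := hwsc j
      refine ⟨z, hz, fun hne => ?_⟩
      have hzn : ‖(z : Euc m)‖ = 1 := norm_coe_sph z
      have hsn : ‖ws j‖ = s := by rw [hzw, norm_smul, hzn, mul_one, Real.norm_of_nonneg hs]
      have hs0 : s ≠ 0 := by rintro rfl; rw [hzw, zero_smul] at hne; exact hne rfl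
      rw [hsn, hzw, smul_smul, inv_mul_cancel₀ hs0, one_smul]
    choose zs hzsm hzse using hrep
    have hnorm : Tendsto (fun j => ‖ws j‖) atTop (𝓝 ‖w‖) := hwst.norm
    have hev : ∀ᶠ j in atTop, ws j ≠ 0 := by
      have : ∀ᶠ j in atTop, 0 < ‖ws j‖ :=
        hnorm.eventually (eventually_gt_nhds (norm_pos_iff.2 hw0))
      exact this.mono fun j hj => norm_pos_iff.1 hj
    have hze : ∀ᶠ j in atTop, (zs j : Euc m) = ‖ws j‖⁻¹ • ws j :=
      hev.mono fun j hj => hzse j hj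
    have hzlim : Tendsto (fun j => (zs j : Euc m)) atTop (𝓝 (‖w‖⁻¹ • w)) := by
      refine Tendsto.congr' (hze.mono fun j hj => hj.symm) ?_
      exact (hnorm.inv₀ (norm_ne_zero_iff.2 hw0)).smul hwst
    have hzmem : ‖w‖⁻¹ • w ∈ Metric.sphere (0 : Euc m) 1 := by
      rw [mem_sphere_iff_norm, sub_zero, norm_smul, norm_inv, norm_norm,
        inv_mul_cancel₀ (norm_ne_zero_iff.2 hw0)]
    have hzlim' : Tendsto zs atTop (𝓝 (⟨‖w‖⁻¹ • w, hzmem⟩ : Sph m)) := by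
      rw [tendsto_subtype_rng]
      exact hzlim
    have hmem : (⟨‖w‖⁻¹ • w, hzmem⟩ : Sph m) ∈ (L : Set (Sph m)) :=
      mem_limit_of_seq h (Eventually.of_forall hzsm) hzlim'
    refine ⟨‖w‖, norm_nonneg w, _, hmem, ?_⟩
    simp only
    rw [smul_smul, mul_inv_cancel₀ (norm_ne_zero_iff.2 hw0), one_smul]

end AuxLemmas

/-- reinforcement of Alexandrov's condition using the spherical polar. -/
theorem alexandrov_reinforced_polar (m : ℕ) (μ : Measure (Sph m))
    [IsProbabilityMeasure μ]
    (halex : ∀ ω : Set (Sph m), ω.Nonempty → IsCompact ω → SphConvex ω → ω ≠ Set.univ →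
      μ ω < unif m (nbhd ω (π / 2))) :
    ∃ ε : ℝ≥0∞, 0 < ε ∧
      ∀ ω : Set (Sph m), ω.Nonempty → IsCompact ω → SphConvex ω → ω ≠ Set.univ →
        unif m (spolar ω) + ε < μ ωᶜ := by
  by_contra hcon
  push_neg at hcon
  -- a sequence of positive epsilons tending to zero
  set ε : ℕ → ℝ≥0∞ := fun j => ((j : ℝ≥0∞) + 1)⁻¹ with hε
  have hεpos : ∀ j, 0 < ε j := fun j =>
    ENNReal.inv_pos.2 (by simp)
  have hεtend : Tendsto ε atTop (𝓝 0) := by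
    have h1 : Tendsto (fun j : ℕ => ((j : ℝ≥0∞))⁻¹) atTop (𝓝 0) :=
      ENNReal.tendsto_inv_nat_nhds_zero
    refine tendsto_of_tendsto_of_tendsto_of_le_of_le tendsto_const_nhds h1 (fun j => zero_le)
      (fun j => ?_)
    exact ENNReal.inv_le_inv.2 (by simp)
  -- choose bad sets
  have hbad : ∀ j : ℕ, ∃ ω : Set (Sph m), ω.Nonempty ∧ IsCompact ω ∧ SphConvex ω ∧
      ω ≠ Set.univ ∧ μ ωᶜ ≤ unif m (spolar ω) + ε j := by
    intro j
    obtain ⟨ω, h1, h2, h3, h4, h5⟩ := hcon (ε j) (hεpos j)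
    exact ⟨ω, h1, h2, h3, h4, h5⟩
  choose ω hne hcp hcv hpr hbd using hbad
  -- supporting hemispheres
  have hhemi : ∀ j, ∃ n : Sph m, ∀ x ∈ ω j, (inner ℝ (x : Euc m) (n : Euc m) : ℝ) ≤ 0 :=
    fun j => exists_hemisphere (hne j) (hcp j) (hcv j) (hpr j)
  choose n hn using hhemi
  -- pass to a convergent subsequence of the sets and the normals
  set K : ℕ → NonemptyCompacts (Sph m) := fun j => ⟨⟨ω j, hcp j⟩, hne j⟩ with hK
  obtain ⟨L, -, φ, hφ, hKφ⟩ := isCompact_univ.tendsto_subseq (fun j => Set.mem_univ (K j))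
  obtain ⟨nn, -, ψ, hψ, hnψ⟩ :=
    isCompact_univ.tendsto_subseq (x := fun j => n (φ j)) (fun j => Set.mem_univ _)
  set ρ : ℕ → ℕ := φ ∘ ψ with hρdef
  have hρ : StrictMono ρ := hφ.comp hψ
  have hKρ : Tendsto (fun j => K (ρ j)) atTop (𝓝 L) := by
    exact hKφ.comp (hψ.tendsto_atTop)
  -- the limit set
  set Ω : Set (Sph m) := (L : Set (Sph m)) with hΩ
  have hΩne : Ω.Nonempty := L.nonempty
  have hΩcp : IsCompact Ω := L.isCompact
  have hΩcv : SphConvex Ω := sphConvex_limit hKρ (fun j => hcv (ρ j))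
  have hΩhemi : ∀ x ∈ Ω, (inner ℝ (x : Euc m) (nn : Euc m) : ℝ) ≤ 0 := by
    intro x hx
    obtain ⟨y, hy, hyx⟩ := exists_approx_seq hKρ hx
    have hval : ∀ j, (inner ℝ ((y j : Euc m)) ((n (ρ j) : Euc m)) : ℝ) ≤ 0 :=
      fun j => hn (ρ j) (y j) (hy j)
    have hcy : Tendsto (fun j => (y j : Euc m)) atTop (𝓝 (x : Euc m)) :=
      (continuous_subtype_val.tendsto _).comp hyx
    have hcn : Tendsto (fun j => ((n (ρ j)) : Euc m)) atTop (𝓝 (nn : Euc m)) :=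
      (continuous_subtype_val.tendsto _).comp hnψ
    have hlim : Tendsto (fun j => (inner ℝ ((y j : Euc m)) ((n (ρ j) : Euc m)) : ℝ)) atTop
        (𝓝 (inner ℝ (x : Euc m) (nn : Euc m) : ℝ)) := hcy.inner hcn
    exact le_of_tendsto hlim (Eventually.of_forall hval)
  have hΩpr : Ω ≠ Set.univ := by
    intro h
    have := hΩhemi nn (h ▸ Set.mem_univ _)
    rw [real_inner_self_eq_norm_sq, norm_coe_sph] at this
    norm_num at this
  -- pointwise strict inequality at the limit set
  have hΩmeas : MeasurableSet Ω := hΩcp.isClosed.measurableSet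
  have hsp_meas : MeasurableSet (spolar Ω) := (isClosed_spolar Ω).measurableSet
  set ν : Measure (Sph m) := unif m with hν
  set s : ℝ≥0∞ := ν (spolar Ω) with hs
  set g : ℝ≥0∞ := μ Ωᶜ with hg
  have hsg : s < g := by
    have h1 : μ Ω < ν (nbhd Ω (π / 2)) := halex Ω hΩne hΩcp hΩcv hΩpr
    rw [nbhd_eq_compl_spolar] at h1
    have h2 : ν (spolar Ω)ᶜ = 1 - s := by
      rw [hs, measure_compl hsp_meas (measure_ne_top ν _), measure_univ]
    rw [h2] at h1
    have h3 : g = 1 - μ Ω := by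
      rw [hg, measure_compl hΩmeas (measure_ne_top μ _), measure_univ]
    rw [h3]
    by_contra hcc
    push_neg at hcc
    have h4 : (1 : ℝ≥0∞) ≤ s + μ Ω := tsub_le_iff_right.1 hcc
    have h5 : (1 : ℝ≥0∞) - s ≤ μ Ω := tsub_le_iff_left.2 h4
    exact absurd (h1.trans_le h5) (lt_irrefl _)
  obtain ⟨c₁, hsc₁, hc₁g⟩ := exists_between hsg
  obtain ⟨c₂, hc₁c₂, hc₂g⟩ := exists_between hc₁g
  -- the shrinking outer approximations of `spolar Ω`
  set A : ℕ → Set (Sph m) := fun k =>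
    {y : Sph m | ∀ x ∈ Ω, (inner ℝ (y : Euc m) (x : Euc m) : ℝ) ≤ 1/((k:ℝ)+1)} with hA
  have hAcl : ∀ k, IsClosed (A k) := fun k => isClosed_spolar_like Ω _
  have hfrac : ∀ k k' : ℕ, k ≤ k' → 1/((k':ℝ)+1) ≤ 1/((k:ℝ)+1) := by
    intro k k' h
    have hkk : (k:ℝ) ≤ (k':ℝ) := by exact_mod_cast h
    have h1 : (0:ℝ) < (k:ℝ)+1 := by positivity
    exact one_div_le_one_div_of_le h1 (by linarith)
  have hAanti : Antitone A := by
    intro k k' hkk' y hy x hx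
    exact (hy x hx).trans (hfrac k k' hkk')
  have hfr0 : Tendsto (fun k : ℕ => 1/((k:ℝ)+1)) atTop (𝓝 0) :=
    tendsto_one_div_add_atTop_nhds_zero_nat
  have hAint : ⋂ k, A k = spolar Ω := by
    ext y
    simp only [Set.mem_iInter, hA, Set.mem_setOf_eq, spolar]
    constructor
    · intro hy x hx
      exact ge_of_tendsto hfr0 (Eventually.of_forall fun k => hy k x hx)
    · intro hy k x hx
      exact (hy x hx).trans (by positivity)
  have hAtend : Tendsto (fun k => ν (A k)) atTop (𝓝 s) := by
    have := tendsto_measure_iInter_atTop (μ := ν)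
      (fun k => ((hAcl k).measurableSet).nullMeasurableSet) hAanti ⟨0, measure_ne_top _ _⟩
    rw [hAint] at this
    simpa [Function.comp_def] using this
  -- the shrinking outer approximations of `Ω`
  set B : ℕ → Set (Sph m) := fun k => Metric.cthickening (1/((k:ℝ)+1)) Ω with hB
  have hBmono : Monotone (fun k => (B k)ᶜ) := by
    intro k k' hkk'
    exact Set.compl_subset_compl.2 (Metric.cthickening_mono (hfrac k k' hkk') Ω)
  have hBint : ⋃ k, (B k)ᶜ = Ωᶜ := by
    rw [← Set.compl_iInter]
    congr 1
    apply le_antisymm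
    · intro x hx
      have h5 : ∀ k : ℕ, infDist x Ω ≤ 1/((k:ℝ)+1) := by
        intro k
        have hm := Set.mem_iInter.1 hx k
        rw [Metric.mem_cthickening_iff] at hm
        have h7 : EMetric.infEdist x Ω ≠ ⊤ :=
          ne_top_of_le_ne_top ENNReal.ofReal_ne_top hm
        have := ENNReal.toReal_mono ENNReal.ofReal_ne_top hm
        rwa [ENNReal.toReal_ofReal (by positivity)] at this
      have h6 : infDist x Ω ≤ 0 := ge_of_tendsto hfr0 (Eventually.of_forall h5)
      exact (hΩcp.isClosed.mem_iff_infDist_zero hΩne).2 (le_antisymm h6 infDist_nonneg)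
    · intro x hx
      exact Set.mem_iInter.2 fun k => Metric.self_subset_cthickening Ω hx
  have hBctend : Tendsto (fun k => μ (B k)ᶜ) atTop (𝓝 g) := by
    have := tendsto_measure_iUnion_atTop (μ := μ) (s := fun k => (B k)ᶜ) hBmono
    rw [hBint] at this
    simpa [Function.comp_def] using this
  -- choose the scale
  obtain ⟨k₀, hk₁, hk₂⟩ := ((hAtend.eventually_lt_const hsc₁).and
    (hBctend.eventually_const_lt hc₂g)).exists
  set δ : ℝ := 1/((k₀:ℝ)+1) with hδdef
  have hδ : 0 < δ := by positivity
  -- choose the index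
  have hhd : Tendsto (fun j => hausdorffDist (K (ρ j) : Set (Sph m)) Ω) atTop (𝓝 0) :=
    hd_tendsto hKρ
  have hd0 : (0:ℝ≥0∞) < c₂ - c₁ := tsub_pos_iff_lt.2 hc₁c₂
  have hερtend : Tendsto (fun j => ε (ρ j)) atTop (𝓝 0) := by
    refine tendsto_of_tendsto_of_tendsto_of_le_of_le tendsto_const_nhds hεtend
      (fun j => zero_le) (fun j => ?_)
    refine ENNReal.inv_le_inv.2 ?_
    have : (j:ℝ≥0∞) ≤ (ρ j : ℝ≥0∞) := by exact_mod_cast hρ.le_apply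
    exact add_le_add this le_rfl
  obtain ⟨j, hjd, hjε⟩ := ((hhd.eventually_lt_const hδ).and
    (hερtend.eventually_lt_const hd0)).exists
  -- the chosen set is close to `Ω`
  have hsub1 : ω (ρ j) ⊆ B k₀ := by
    intro x hx
    rw [hB, Metric.mem_cthickening_iff]
    have h6 : infDist x Ω ≤ hausdorffDist (K (ρ j) : Set (Sph m)) Ω :=
      infDist_le_hausdorffDist_of_mem hx (hEdist_ne_top (K (ρ j)) L)
    have h7 : infEDist x Ω ≠ ⊤ := by
      refine ne_top_of_le_ne_top (hEdist_ne_top (K (ρ j)) L) ?_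
      exact EMetric.infEdist_le_hausdorffEdist_of_mem hx
    rw [ENNReal.le_ofReal_iff_toReal_le h7 hδ.le]
    exact h6.trans hjd.le
  have hm1 : c₂ < μ (ω (ρ j))ᶜ :=
    hk₂.trans_le (measure_mono (Set.compl_subset_compl.2 hsub1))
  -- its polar is inside `A k₀`
  have hsub2 : spolar (ω (ρ j)) ⊆ A k₀ := by
    intro y hy x hx
    obtain ⟨x', hx', hdx⟩ := (hcp (ρ j)).exists_infDist_eq_dist (hne (ρ j)) x
    have hdist : dist x x' < δ := by
      rw [← hdx]
      have h8 : infDist x (ω (ρ j)) ≤ hausdorffDist Ω (K (ρ j) : Set (Sph m)) :=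
        infDist_le_hausdorffDist_of_mem hx (hEdist_ne_top L (K (ρ j)))
      rw [hausdorffDist_comm] at h8
      exact h8.trans_lt hjd
    have hinner : (inner ℝ (y : Euc m) (x' : Euc m) : ℝ) ≤ 0 := hy x' hx'
    have hsplit : (inner ℝ (y : Euc m) ((x : Euc m) - (x' : Euc m)) : ℝ)
        = inner ℝ (y : Euc m) (x : Euc m) - inner ℝ (y : Euc m) (x' : Euc m) :=
      inner_sub_right _ _ _
    have hbound : (inner ℝ (y : Euc m) ((x : Euc m) - (x' : Euc m)) : ℝ)
        ≤ ‖(y : Euc m)‖ * ‖(x : Euc m) - (x' : Euc m)‖ := real_inner_le_norm _ _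
    have hnorm : ‖(x : Euc m) - (x' : Euc m)‖ = dist x x' := by
      rw [Subtype.dist_eq, dist_eq_norm]
    rw [norm_coe_sph, one_mul, hnorm] at hbound
    have : (inner ℝ (y : Euc m) (x : Euc m) : ℝ) ≤ dist x x' + inner ℝ (y : Euc m) (x' : Euc m) := by
      linarith [hsplit ▸ hbound]
    calc (inner ℝ (y : Euc m) (x : Euc m) : ℝ) ≤ dist x x' + 0 := by linarith
      _ ≤ δ := by linarith
  have hm2 : ν (spolar (ω (ρ j))) < c₁ := (measure_mono hsub2).trans_lt hk₁
  -- the contradiction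
  have hchain : μ (ω (ρ j))ᶜ < c₂ := by
    calc μ (ω (ρ j))ᶜ ≤ ν (spolar (ω (ρ j))) + ε (ρ j) := hbd (ρ j)
      _ < c₁ + (c₂ - c₁) :=
        ENNReal.add_lt_add_of_lt_of_le (ENNReal.inv_ne_top.2 (by simp)) hm2 hjε.le
      _ = c₂ := add_tsub_cancel_of_le hc₁c₂.le
  exact absurd (hm1.trans hchain) (lt_irrefl _)
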